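/- Let T be a finite set of complete trajectories, X a finite set of terminal objects, with each trajectory τ having a terminal object x(τ). Suppose P_F is a probability distribution on T, P_B(·|x) is for each x ∈ X a probability distribution on the trajectories terminating at x, R : X → ℝ_{>0}, and Z > 0. If Z · P_F(τ) = R(x(τ)) · P_B(τ | x(τ)) for every trajectory τ, then for every x ∈ X, the marginal probability P_F^⊤(x) := Σ_{τ : x(τ) = x} P_F(τ) equals R(x)/Z; in particular Z = Σ_{x ∈ X} R(x) and P_F^⊤(x) is proportional to R(x). -/
import Mathlib


/-- Correctness of the trajectory balance condition: if `Z * P_F τ = R (x τ) * P_B τ`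
for all trajectories `τ`, where `P_F` is a distribution on trajectories, `P_B (·|x)` is a
distribution on trajectories terminating at `x`, `R` is positive and `Z > 0`, then the
forward marginal of every terminal object `x` equals `R x / Z`, and `Z = ∑ x, R x`. -/
theorem trajectory_balance_correctness {T X : Type*} [Fintype T] [Fintype X]
    [DecidableEq X] (term : T → X) (PF PB : T → ℝ) (R : X → ℝ) (Z : ℝ)
    (hPF0 : ∀ τ, 0 ≤ PF τ) (hPF1 : ∑ τ, PF τ = 1)
    (hPB0 : ∀ τ, 0 ≤ PB τ)
    (hPB1 : ∀ x : X, ∑ τ ∈ Finset.univ.filter (fun τ => term τ = x), PB τ = 1)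
    (hR : ∀ x, 0 < R x) (hZ : 0 < Z)
    (hTB : ∀ τ, Z * PF τ = R (term τ) * PB τ) :
    (∀ x : X, ∑ τ ∈ Finset.univ.filter (fun τ => term τ = x), PF τ = R x / Z) ∧
      Z = ∑ x : X, R x := by
  have key : ∀ x : X, ∑ τ ∈ Finset.univ.filter (fun τ => term τ = x), PF τ = R x / Z := by
    intro x
    have h1 : ∑ τ ∈ Finset.univ.filter (fun τ => term τ = x), Z * PF τ
        = ∑ τ ∈ Finset.univ.filter (fun τ => term τ = x), R x * PB τ := by
      apply Finset.sum_congr rfl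
      intro τ hτ
      have hx : term τ = x := (Finset.mem_filter.mp hτ).2
      rw [hTB τ, hx]
    rw [← Finset.mul_sum, ← Finset.mul_sum, hPB1 x, mul_one] at h1
    field_simp
    linarith [h1]
  refine ⟨key, ?_⟩
  have h2 : ∑ x : X, R x / Z = 1 := by
    rw [← hPF1, ← Finset.sum_fiberwise (g := term) (f := PF)]
    exact Finset.sum_congr rfl (fun x _ => (key x).symm)
  have h3 : (∑ x : X, R x) / Z = 1 := by rw [Finset.sum_div]; exact h2
  field_simp at h3
  linarith
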